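/- Let π = 1 + 4i ∈ ℤ[i], so that 𝔽 = ℤ[i]/(π) is a field with 17 elements. Let n = 4s + t with s ≥ 0 and 0 < t < 4. Then 8s + 2t − 1 ≤ d_π(n, 1) ≤ 8s + 2t, where d_π(n, 1) is the maximum over nonzero vectors v ∈ 𝔽^n of the minimum over nonzero scalars λ ∈ 𝔽 of wt_π(λ·v). -/

import Mathlib

open scoped Classical

noncomputable section

/-- The quotient ring `ℤ[i]/(π)`. -/
abbrev GQuot (pi : GaussianInt) : Type := GaussianInt ⧸ Ideal.span {pi}

/-- The quotient map `ℤ[i] → ℤ[i]/(π)`. -/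
def gmk (pi : GaussianInt) : GaussianInt →+* GQuot pi := Ideal.Quotient.mk (Ideal.span {pi})

/-- Mannheim weight of an element of `ℤ[i]/(π)`:
the minimum of `|x| + |y|` over representatives `x + y·i`. -/
def mWt (pi : GaussianInt) (α : GQuot pi) : ℕ :=
  sInf { w : ℕ | ∃ z : GaussianInt, gmk pi z = α ∧ z.re.natAbs + z.im.natAbs = w }

/-- Mannheim weight of a vector: the sum of the Mannheim weights of its coordinates. -/
def mWtVec (pi : GaussianInt) {n : ℕ} (v : Fin n → GQuot pi) : ℕ := ∑ i, mWt pi (v i)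

/-- `dPi1 pi n`: the maximum over nonzero vectors `v ∈ 𝔽^n` of the minimum over nonzero
scalars `λ` of the Mannheim weight of `λ • v` (i.e. `d_π(n,1)`). -/
def dPi1 (pi : GaussianInt) (n : ℕ) : ℕ :=
  sSup { d : ℕ | ∃ v : Fin n → GQuot pi, v ≠ 0 ∧
    sInf { w : ℕ | ∃ l : GQuot pi, l ≠ 0 ∧ mWtVec pi (l • v) = w } = d }

set_option synthInstance.maxHeartbeats 1000000
set_option maxHeartbeats 1000000

-- the ring hom ℤ[i] → ZMod 17 sending i to 4
def phi : GaussianInt →+* ZMod 17 := Zsqrtd.lift ⟨4, by decide⟩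

@[simp] lemma phi_apply (z : GaussianInt) : phi z = (z.re : ZMod 17) + z.im * 4 :=
  Zsqrtd.lift_apply_apply _ _

def piG : GaussianInt := ⟨1, 4⟩

lemma piG_dvd_iff (z : GaussianInt) : piG ∣ z ↔ phi z = 0 := by
  constructor
  · rintro ⟨w, rfl⟩
    rw [map_mul]
    have : phi piG = 0 := by rw [phi_apply]; decide
    rw [this, zero_mul]
  · intro h
    rw [phi_apply] at h
    have h17 : (17 : ℤ) ∣ z.re + z.im * 4 := by
      have := (ZMod.intCast_zmod_eq_zero_iff_dvd (z.re + z.im * 4) 17).mp (by push_cast; exact h)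
      exact_mod_cast this
    obtain ⟨k, hk⟩ := h17
    refine ⟨⟨k, z.im - 4 * k⟩, ?_⟩
    have : z.re = 17 * k - z.im * 4 := by linarith
    ext <;> simp [piG, Zsqrtd.re_mul, Zsqrtd.im_mul, this] <;> ring

set_option synthInstance.maxHeartbeats 1000000
set_option maxHeartbeats 1000000

lemma gmk_eq_iff (a b : GaussianInt) : gmk piG a = gmk piG b ↔ phi a = phi b := by
  rw [gmk, Ideal.Quotient.mk_eq_mk_iff_sub_mem, Ideal.mem_span_singleton, piG_dvd_iff,
    map_sub, sub_eq_zero]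

def phibar : GQuot piG →+* ZMod 17 :=
  Ideal.Quotient.lift _ phi (fun a ha => by
    rw [← piG_dvd_iff, ← Ideal.mem_span_singleton]; exact ha)

@[simp] lemma phibar_gmk (z : GaussianInt) : phibar (gmk piG z) = phi z := rfl

lemma phibar_inj : Function.Injective phibar := by
  rw [injective_iff_map_eq_zero]
  intro a ha
  obtain ⟨z, rfl⟩ := Ideal.Quotient.mk_surjective (I := Ideal.span {piG}) a
  have : phi z = 0 := ha
  rw [← piG_dvd_iff] at this
  exact Ideal.Quotient.eq_zero_iff_mem.mpr (Ideal.mem_span_singleton.mpr this)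

def wt17 (c : ZMod 17) : ℕ :=
  [0,1,2,2,1,2,3,3,2,2,3,3,2,1,2,2,1].getD c.val 0

lemma wt17_le (z : GaussianInt) : wt17 (phi z) ≤ z.re.natAbs + z.im.natAbs := by
  rcases le_or_gt 3 (z.re.natAbs + z.im.natAbs) with h | h
  · calc wt17 (phi z) ≤ 3 := by
          have : ∀ c : ZMod 17, wt17 c ≤ 3 := by decide
          exact this _
      _ ≤ _ := h
  · obtain ⟨a, b⟩ := z
    simp only [phi_apply] at *
    have h1 : -2 ≤ a := by omega
    have h2 : a ≤ 2 := by omega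
    have h3 : -2 ≤ b := by omega
    have h4 : b ≤ 2 := by omega
    interval_cases a <;> interval_cases b <;> decide

lemma exists_rep (c : ZMod 17) :
    ∃ z : GaussianInt, phi z = c ∧ z.re.natAbs + z.im.natAbs = wt17 c := by
  fin_cases c
  · exact ⟨⟨0,0⟩, by rw [phi_apply]; rfl, by decide⟩
  · exact ⟨⟨1,0⟩, by rw [phi_apply]; rfl, by decide⟩
  · exact ⟨⟨2,0⟩, by rw [phi_apply]; rfl, by decide⟩
  · exact ⟨⟨-1,1⟩, by rw [phi_apply]; rfl, by decide⟩
  · exact ⟨⟨0,1⟩, by rw [phi_apply]; rfl, by decide⟩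
  · exact ⟨⟨1,1⟩, by rw [phi_apply]; rfl, by decide⟩
  · exact ⟨⟨2,1⟩, by rw [phi_apply]; rfl, by decide⟩
  · exact ⟨⟨-1,2⟩, by rw [phi_apply]; rfl, by decide⟩
  · exact ⟨⟨0,2⟩, by rw [phi_apply]; rfl, by decide⟩
  · exact ⟨⟨0,-2⟩, by rw [phi_apply]; rfl, by decide⟩
  · exact ⟨⟨1,-2⟩, by rw [phi_apply]; rfl, by decide⟩
  · exact ⟨⟨-2,-1⟩, by rw [phi_apply]; rfl, by decide⟩
  · exact ⟨⟨-1,-1⟩, by rw [phi_apply]; rfl, by decide⟩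
  · exact ⟨⟨0,-1⟩, by rw [phi_apply]; rfl, by decide⟩
  · exact ⟨⟨1,-1⟩, by rw [phi_apply]; rfl, by decide⟩
  · exact ⟨⟨-2,0⟩, by rw [phi_apply]; rfl, by decide⟩
  · exact ⟨⟨-1,0⟩, by rw [phi_apply]; rfl, by decide⟩

lemma mWt_eq (α : GQuot piG) : mWt piG α = wt17 (phibar α) := by
  obtain ⟨z, rfl⟩ := Ideal.Quotient.mk_surjective (I := Ideal.span {piG}) α
  change mWt piG (gmk piG z) = wt17 (phi z)
  apply le_antisymm
  · obtain ⟨z0, hz0, hw⟩ := exists_rep (phi z)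
    exact Nat.sInf_le ⟨z0, (gmk_eq_iff z0 z).mpr hz0, hw⟩
  · have hne : {w : ℕ | ∃ z' : GaussianInt, gmk piG z' = gmk piG z ∧
        z'.re.natAbs + z'.im.natAbs = w}.Nonempty :=
      ⟨z.re.natAbs + z.im.natAbs, z, rfl, rfl⟩
    apply le_csInf hne
    rintro w ⟨z', hz', rfl⟩
    rw [← (gmk_eq_iff z' z).mp hz']
    exact wt17_le z'

lemma mWtVec_smul {n : ℕ} (l : GQuot piG) (v : Fin n → GQuot piG) :
    mWtVec piG (l • v) = ∑ i, wt17 (phibar l * phibar (v i)) := by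
  unfold mWtVec
  refine Finset.sum_congr rfl fun i _ => ?_
  rw [Pi.smul_apply, smul_eq_mul, mWt_eq, map_mul]

lemma sum_range_add4 (f : ℕ → ℕ) (N : ℕ) :
    ∑ i ∈ Finset.range (N+4), f i =
      (∑ i ∈ Finset.range N, f i) + (f N + f (N+1) + f (N+2) + f (N+3)) := by
  rw [show N+4 = N+1+1+1+1 by omega]
  rw [Finset.sum_range_succ, Finset.sum_range_succ, Finset.sum_range_succ, Finset.sum_range_succ]
  rw [show N+1+1 = N+2 by omega, show N+2+1 = N+3 by omega]
  omega

lemma sum_block (u : ZMod 17) (hu : u ≠ 0) (m : ℕ) :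
    wt17 (u * 3^(m%4)) + wt17 (u*3^((m+1)%4)) + wt17 (u*3^((m+2)%4))
      + wt17 (u*3^((m+3)%4)) = 8 := by
  have hb : wt17 u + wt17 (u*3) + wt17 (u*9) + wt17 (u*27) = 8 := by
    revert hu
    revert u
    decide
  have h0 : m % 4 < 4 := by omega
  rw [show (m+1)%4 = (m%4+1)%4 by omega, show (m+2)%4 = (m%4+2)%4 by omega,
    show (m+3)%4 = (m%4+3)%4 by omega]
  generalize m % 4 = r at h0 ⊢
  interval_cases r <;> norm_num <;> omega

lemma sum_head (u : ZMod 17) (hu : u ≠ 0) (t : ℕ) (ht : t ≤ 3) :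
    2*t - 1 ≤ ∑ i ∈ Finset.range t, wt17 (u * 3^(i%4)) := by
  have d1 : 1 ≤ wt17 u := by revert hu; revert u; decide
  have d2 : 3 ≤ wt17 u + wt17 (u*3) := by revert hu; revert u; decide
  have d3 : 5 ≤ wt17 u + wt17 (u*3) + wt17 (u*9) := by
    revert hu; revert u; decide
  interval_cases t <;>
    simp only [Finset.sum_range_succ, Finset.sum_range_zero, Finset.sum_range_one] <;>
    norm_num <;> omega

lemma sum_count (u : ZMod 17) (hu : u ≠ 0) (s t : ℕ) (ht : t ≤ 3) :
    8*s + (2*t - 1) ≤ ∑ i ∈ Finset.range (4*s+t), wt17 (u * 3^(i%4)) := by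
  induction s with
  | zero => simpa using sum_head u hu t ht
  | succ s ih =>
    rw [show 4*(s+1)+t = (4*s+t)+4 by ring, sum_range_add4]
    have hb := sum_block u hu (4*s+t)
    omega

lemma gq_one_ne_zero : (1 : GQuot piG) ≠ 0 := by
  intro h
  have : (1 : ZMod 17) = 0 := by
    have := congrArg phibar h
    rwa [map_one, map_zero] at this
  exact absurd this (by decide)

lemma phi3 : phi (3 : GaussianInt) = 3 := map_ofNat phi 3

lemma inf_le (n : ℕ) (v : Fin n → GQuot piG) :
    sInf { w : ℕ | ∃ l : GQuot piG, l ≠ 0 ∧ mWtVec piG (l • v) = w } ≤ 2 * n := by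
  have key : ∀ c : ZMod 17,
      wt17 ((3:ZMod 17)^0*c) + wt17 ((3:ZMod 17)^1*c) + wt17 ((3:ZMod 17)^2*c)
        + wt17 ((3:ZMod 17)^3*c) ≤ 8 := by decide
  set A : ℕ → ℕ := fun k => ∑ i, wt17 ((3:ZMod 17)^k * phibar (v i)) with hA
  have hsum : A 0 + A 1 + A 2 + A 3 ≤ 8 * n := by
    have h1 : A 0 + A 1 + A 2 + A 3
        = ∑ i : Fin n, (wt17 ((3:ZMod 17)^0 * phibar (v i)) + wt17 ((3:ZMod 17)^1 * phibar (v i))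
            + wt17 ((3:ZMod 17)^2 * phibar (v i)) + wt17 ((3:ZMod 17)^3 * phibar (v i))) := by
      simp [hA, Finset.sum_add_distrib]
    rw [h1]
    calc _ ≤ ∑ _i : Fin n, 8 := Finset.sum_le_sum (fun i _ => key _)
      _ = 8 * n := by simp [Finset.sum_const, mul_comm]
  have hex : ∃ k, k < 4 ∧ A k ≤ 2*n := by
    by_contra h
    push_neg at h
    have h0 := h 0 (by norm_num)
    have h1 := h 1 (by norm_num)
    have h2 := h 2 (by norm_num)
    have h3 := h 3 (by norm_num)
    omega
  obtain ⟨k, hk4, hAk⟩ := hex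
  have hl : gmk piG ((3:GaussianInt)^k) ≠ 0 := by
    intro h
    have h2 : phibar (gmk piG ((3:GaussianInt)^k)) = 0 := by rw [h, map_zero]
    rw [phibar_gmk, map_pow, phi3] at h2
    interval_cases k <;> revert h2 <;> decide
  have hmem : A k ∈ { w : ℕ | ∃ l : GQuot piG, l ≠ 0 ∧ mWtVec piG (l • v) = w } := by
    refine ⟨gmk piG ((3:GaussianInt)^k), hl, ?_⟩
    rw [mWtVec_smul, phibar_gmk, map_pow, phi3]
  exact le_trans (Nat.sInf_le hmem) hAk

/-- for `π = 1 + 4i` (so `𝔽 ≅ 𝔽₁₇`) and `n = 4s + t` with `0 < t < 4`,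
`8s + 2t - 1 ≤ d_π(n,1) ≤ 8s + 2t`. -/
theorem stmt10 (s t : ℕ) (ht0 : 0 < t) (ht4 : t < 4) :
    8 * s + 2 * t - 1 ≤ dPi1 (⟨1, 4⟩ : GaussianInt) (4 * s + t) ∧
      dPi1 (⟨1, 4⟩ : GaussianInt) (4 * s + t) ≤ 8 * s + 2 * t := by
  have hpi : (⟨1, 4⟩ : GaussianInt) = piG := rfl
  rw [hpi]
  set n : ℕ := 4 * s + t with hn
  set D : Set ℕ := { d : ℕ | ∃ v : Fin n → GQuot piG, v ≠ 0 ∧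
    sInf { w : ℕ | ∃ l : GQuot piG, l ≠ 0 ∧ mWtVec piG (l • v) = w } = d } with hD
  have hdp : dPi1 piG n = sSup D := rfl
  have hub : ∀ d ∈ D, d ≤ 2 * n := by
    rintro d ⟨v, hv, rfl⟩
    exact inf_le n v
  constructor
  · -- lower bound
    set v : Fin n → GQuot piG := fun i => gmk piG ((3:GaussianInt) ^ ((i : ℕ) % 4)) with hv
    have hvphi : ∀ i : Fin n, phibar (v i) = (3 : ZMod 17) ^ ((i : ℕ) % 4) := by
      intro i
      rw [hv]
      simp only [phibar_gmk, map_pow, phi3]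
    have hn0 : 0 < n := by omega
    have hv0 : v ≠ 0 := by
      intro h
      have h1 := congrFun h ⟨0, hn0⟩
      have h2 := congrArg phibar h1
      rw [hvphi ⟨0, hn0⟩] at h2
      simp only [Pi.zero_apply, map_zero] at h2
      exact absurd h2 (by decide)
    have hmem : sInf { w : ℕ | ∃ l : GQuot piG, l ≠ 0 ∧ mWtVec piG (l • v) = w } ∈ D :=
      ⟨v, hv0, rfl⟩
    have hge : 8 * s + 2 * t - 1 ≤
        sInf { w : ℕ | ∃ l : GQuot piG, l ≠ 0 ∧ mWtVec piG (l • v) = w } := by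
      have hne : { w : ℕ | ∃ l : GQuot piG, l ≠ 0 ∧ mWtVec piG (l • v) = w }.Nonempty :=
        ⟨mWtVec piG ((1 : GQuot piG) • v), 1, gq_one_ne_zero, rfl⟩
      apply le_csInf hne
      rintro w ⟨l, hl, rfl⟩
      have hu : phibar l ≠ 0 := fun h => hl (phibar_inj (by rw [h, map_zero]))
      rw [mWtVec_smul]
      calc 8 * s + 2 * t - 1 = 8 * s + (2 * t - 1) := by omega
        _ ≤ ∑ i ∈ Finset.range n, wt17 (phibar l * 3 ^ (i % 4)) :=
            sum_count _ hu s t (by omega)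
        _ = ∑ i : Fin n, wt17 (phibar l * 3 ^ ((i : ℕ) % 4)) :=
            (Fin.sum_univ_eq_sum_range (fun i => wt17 (phibar l * 3 ^ (i % 4))) n).symm
        _ = ∑ i : Fin n, wt17 (phibar l * phibar (v i)) := by
            refine Finset.sum_congr rfl fun i _ => ?_
            rw [hvphi i]
    rw [hdp]
    exact le_trans hge (le_csSup ⟨2 * n, fun d hd => hub d hd⟩ hmem)
  · rw [hdp]
    apply csSup_le'
    intro d hd
    have := hub d hd
    omega
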